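/- Let μ be a measure on X, p > 2, and ψ : X → (0,∞) measurable with μ({ψ ≤ t}) ≤ C t for all t > 0. If f : X → ℂ is measurable with ∫_X |f|^p ψ^{p−2} dμ < ∞, then f belongs to the Lorentz space L^{p',p}(X, μ) (where 1/p + 1/p' = 1) and ‖f‖*_{p',p} ≤ C_p (∫_X |f|^p ψ^{p−2} dμ)^{1/p}. -/

import Mathlib

open MeasureTheory Set ENNReal NNReal

/-- The decreasing rearrangement of `g` with respect to `μ`. -/
noncomputable def decRearr {X : Type*} [MeasurableSpace X] (μ : Measure X) (g : X → ℂ)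
    (t : ℝ) : ℝ≥0∞ :=
  sInf {s : ℝ≥0∞ | μ {x | s < (‖g x‖₊ : ℝ≥0∞)} ≤ ENNReal.ofReal t}

/-- The Lorentz quasinorm `‖g‖*_{p,s}`. -/
noncomputable def lorentzNorm {X : Type*} [MeasurableSpace X] (μ : Measure X) (g : X → ℂ)
    (p s : ℝ) : ℝ≥0∞ :=
  (ENNReal.ofReal (s / p) *
      ∫⁻ t in Ioi (0 : ℝ), ENNReal.ofReal (t ^ (s / p - 1)) * decRearr μ g t ^ s) ^ (1 / s)

lemma rpow_layer {p : ℝ} (hp : 1 ≤ p) (a : ℝ≥0∞) :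
    a ^ p = ∫⁻ s in Ioi (0:ℝ), {s : ℝ | ENNReal.ofReal s < a}.indicator
      (fun s => ENNReal.ofReal (p * s ^ (p-1))) s := by
  have hp0 : (0:ℝ) < p := by linarith
  have hmeas : Measurable fun s : ℝ => ENNReal.ofReal (p * s ^ (p-1)) := by fun_prop
  have hset : MeasurableSet {s : ℝ | ENNReal.ofReal s < a} :=
    measurableSet_lt (by fun_prop) measurable_const
  rcases eq_or_ne a ⊤ with rfl | ha
  · have h1 : {s : ℝ | ENNReal.ofReal s < ⊤} = univ := by
      ext s; simp [ofReal_lt_top]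
    rw [h1, indicator_univ]
    rw [ENNReal.top_rpow_of_pos hp0, eq_comm, eq_top_iff]
    calc (⊤:ℝ≥0∞) = ENNReal.ofReal p * volume (Ioi (1:ℝ)) := by
          simp [Real.volume_Ioi, ENNReal.mul_top, (ENNReal.ofReal_pos.2 hp0).ne']
      _ = ∫⁻ s in Ioi (1:ℝ), ENNReal.ofReal p := by rw [setLIntegral_const, mul_comm]
      _ ≤ ∫⁻ s in Ioi (1:ℝ), ENNReal.ofReal (p * s ^ (p-1)) := by
          refine setLIntegral_mono hmeas (fun s hs => ?_)
          refine ENNReal.ofReal_le_ofReal ?_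
          nlinarith [Real.one_le_rpow (le_of_lt hs) (by linarith : (0:ℝ) ≤ p - 1)]
      _ ≤ ∫⁻ s in Ioi (0:ℝ), ENNReal.ofReal (p * s ^ (p-1)) :=
          lintegral_mono_set (Ioi_subset_Ioi (by norm_num))
  · set b := a.toReal with hb
    have hab : a = ENNReal.ofReal b := by rw [hb, ENNReal.ofReal_toReal ha]
    have hbnn : 0 ≤ b := ENNReal.toReal_nonneg
    rw [lintegral_indicator hset, Measure.restrict_restrict hset]
    have hseteq : {s : ℝ | ENNReal.ofReal s < a} ∩ Ioi 0 = Ioo 0 b := by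
      ext s
      simp only [mem_inter_iff, mem_setOf_eq, mem_Ioi, mem_Ioo, hab]
      constructor
      · rintro ⟨h1, h2⟩
        exact ⟨h2, by rwa [ENNReal.ofReal_lt_ofReal_iff_of_nonneg h2.le] at h1⟩
      · rintro ⟨h1, h2⟩
        exact ⟨by rwa [ENNReal.ofReal_lt_ofReal_iff_of_nonneg h1.le], h1⟩
    rw [hseteq, hab]
    -- now: ofReal b ^ p = ∫⁻ s in Ioo 0 b, ofReal (p * s^(p-1))
    have hint : IntegrableOn (fun s : ℝ => p * s ^ (p-1)) (Ioo 0 b) := by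
      have : IntervalIntegrable (fun s : ℝ => p * s ^ (p-1)) volume 0 b :=
        (intervalIntegral.intervalIntegrable_rpow (r := p-1) (a := 0) (b := b)
          (Or.inl (by linarith))).const_mul p
      rw [intervalIntegrable_iff_integrableOn_Ioc_of_le hbnn] at this
      exact this.mono_set Ioo_subset_Ioc_self
    have hreal : ∫ x in Ioo (0:ℝ) b, p * x ^ (p-1) = b ^ p := by
      rw [← integral_Ioc_eq_integral_Ioo, ← intervalIntegral.integral_of_le hbnn,
        intervalIntegral.integral_const_mul, integral_rpow (Or.inl (by linarith))]
      rw [Real.zero_rpow (by linarith : p - 1 + 1 ≠ 0)]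
      have : p - 1 + 1 = p := by ring
      rw [this]
      field_simp
      rw [sub_zero]
    rw [← MeasureTheory.ofReal_integral_eq_lintegral_ofReal hint, hreal,
      ← ENNReal.ofReal_rpow_of_nonneg hbnn hp0.le]
    refine (ae_restrict_iff' measurableSet_Ioo).2 (Filter.Eventually.of_forall ?_)
    intro s hs
    have := Real.rpow_nonneg hs.1.le (p-1)
    positivity

lemma layer_repr {α : Type*} [MeasurableSpace α] (m : Measure α) [SFinite m]
    {H : α → ℝ≥0∞} (hH : Measurable H) {p : ℝ} (hp : 1 ≤ p) :
    ∫⁻ x, H x ^ p ∂m = ∫⁻ s in Ioi (0:ℝ),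
      ENNReal.ofReal (p * s ^ (p-1)) * m {x | ENNReal.ofReal s < H x} := by
  have step1 : ∫⁻ x, H x ^ p ∂m = ∫⁻ x, (∫⁻ s in Ioi (0:ℝ),
      {s : ℝ | ENNReal.ofReal s < H x}.indicator (fun s => ENNReal.ofReal (p * s ^ (p-1))) s) ∂m :=
    lintegral_congr fun x => rpow_layer hp (H x)
  rw [step1, lintegral_lintegral_swap]
  · refine setLIntegral_congr_fun measurableSet_Ioi (fun s _ => ?_)
    have : ∀ x, {s : ℝ | ENNReal.ofReal s < H x}.indicator
        (fun s => ENNReal.ofReal (p * s ^ (p-1))) s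
        = {x | ENNReal.ofReal s < H x}.indicator
            (fun _ => ENNReal.ofReal (p * s ^ (p-1))) x := by
      intro x
      by_cases hx : ENNReal.ofReal s < H x <;>
        simp [indicator_apply, hx]
    rw [lintegral_congr this, lintegral_indicator_const]
    exact measurableSet_lt measurable_const hH
  · apply Measurable.aemeasurable
    have : (Function.uncurry fun x s => {s : ℝ | ENNReal.ofReal s < H x}.indicator
        (fun s => ENNReal.ofReal (p * s ^ (p-1))) s)
        = fun q : α × ℝ => if ENNReal.ofReal q.2 < H q.1
            then ENNReal.ofReal (p * q.2 ^ (p-1)) else 0 := by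
      ext q
      by_cases hq : ENNReal.ofReal q.2 < H q.1 <;>
        simp [Function.uncurry, indicator_apply, hq]
    rw [this]
    refine Measurable.ite ?_ (by fun_prop) measurable_const
    exact measurableSet_lt (by fun_prop) (hH.comp measurable_fst)

lemma layer_compare {α β : Type*} [MeasurableSpace α] [MeasurableSpace β]
    (ν : Measure α) (ρ : Measure β) [SFinite ν] [SFinite ρ]
    {F : α → ℝ≥0∞} {G : β → ℝ≥0∞} (hF : Measurable F) (hG : Measurable G)
    {p : ℝ} (hp : 1 ≤ p) (h : ∀ s : ℝ≥0∞, ν {a | s < F a} ≤ ρ {b | s < G b}) :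
    ∫⁻ a, F a ^ p ∂ν ≤ ∫⁻ b, G b ^ p ∂ρ := by
  rw [layer_repr ν hF hp, layer_repr ρ hG hp]
  exact lintegral_mono fun s => mul_le_mul_right (h _) _

lemma decRearr_le {X : Type*} [MeasurableSpace X] {μ : Measure X} {g : X → ℂ} {t : ℝ}
    {s : ℝ≥0∞} (h : μ {x | s < (‖g x‖₊ : ℝ≥0∞)} ≤ ENNReal.ofReal t) :
    decRearr μ g t ≤ s := sInf_le h

lemma decRearr_anti {X : Type*} [MeasurableSpace X] (μ : Measure X) (g : X → ℂ) :
    Antitone (decRearr μ g) := by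
  intro t1 t2 h
  exact sInf_le_sInf fun s hs => le_trans hs (ENNReal.ofReal_le_ofReal h)

lemma decRearr_mem {X : Type*} [MeasurableSpace X] (μ : Measure X) (g : X → ℂ) (t : ℝ) :
    μ {x | decRearr μ g t < (‖g x‖₊ : ℝ≥0∞)} ≤ ENNReal.ofReal t := by
  set S := {s : ℝ≥0∞ | μ {x | s < (‖g x‖₊ : ℝ≥0∞)} ≤ ENNReal.ofReal t} with hS
  have hne : S.Nonempty := ⟨⊤, by simp [hS]⟩
  obtain ⟨u, hu_anti, hu_tendsto, hu_mem⟩ := exists_seq_tendsto_sInf hne (OrderBot.bddBelow S)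
  have hsets : {x | decRearr μ g t < (‖g x‖₊ : ℝ≥0∞)} = ⋃ n, {x | u n < (‖g x‖₊ : ℝ≥0∞)} := by
    ext x
    simp only [mem_setOf_eq, mem_iUnion]
    constructor
    · intro hx
      exact (Filter.Tendsto.eventually_lt_const hx hu_tendsto).exists
    · rintro ⟨n, hn⟩
      exact lt_of_le_of_lt (sInf_le (hu_mem n)) hn
  have hmono : Monotone fun n => {x | u n < (‖g x‖₊ : ℝ≥0∞)} := by
    intro n m hnm x hx
    exact lt_of_le_of_lt (hu_anti hnm) hx
  rw [hsets, hmono.measure_iUnion]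
  exact iSup_le fun n => hu_mem n

lemma decRearr_mul_le {X : Type*} [MeasurableSpace X] (μ : Measure X) (f g h : X → ℂ)
    (hfg : ∀ x, (‖f x‖₊ : ℝ≥0∞) ≤ (‖g x‖₊ : ℝ≥0∞) * ‖h x‖₊) {t1 t2 : ℝ}
    (h1 : 0 ≤ t1) (h2 : 0 ≤ t2) :
    decRearr μ f (t1 + t2) ≤ decRearr μ g t1 * decRearr μ h t2 := by
  apply decRearr_le
  have hsub : {x | decRearr μ g t1 * decRearr μ h t2 < (‖f x‖₊ : ℝ≥0∞)}
      ⊆ {x | decRearr μ g t1 < (‖g x‖₊ : ℝ≥0∞)} ∪ {x | decRearr μ h t2 < (‖h x‖₊ : ℝ≥0∞)} := by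
    intro x hx
    by_contra hc
    simp only [mem_union, mem_setOf_eq, not_or, not_lt] at hc
    exact absurd ((hfg x).trans (mul_le_mul' hc.1 hc.2)) (not_le.2 hx)
  calc μ {x | decRearr μ g t1 * decRearr μ h t2 < (‖f x‖₊ : ℝ≥0∞)}
      ≤ μ {x | decRearr μ g t1 < (‖g x‖₊ : ℝ≥0∞)} + μ {x | decRearr μ h t2 < (‖h x‖₊ : ℝ≥0∞)} :=
        le_trans (measure_mono hsub) (measure_union_le _ _)
    _ ≤ ENNReal.ofReal t1 + ENNReal.ofReal t2 := add_le_add (decRearr_mem μ g t1) (decRearr_mem μ h t2)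
    _ = ENNReal.ofReal (t1 + t2) := (ENNReal.ofReal_add h1 h2).symm

lemma dist_decRearr_scaled {X : Type*} [MeasurableSpace X] (μ : Measure X) (g : X → ℂ)
    (s : ℝ≥0∞) :
    (volume.restrict (Ioi (0:ℝ))) {t : ℝ | s < decRearr μ g (t/2)}
      ≤ ((2:ℝ≥0∞) • μ) {x | s < (‖g x‖₊ : ℝ≥0∞)} := by
  set M := μ {x | s < (‖g x‖₊ : ℝ≥0∞)} with hM
  have hsmul : ((2:ℝ≥0∞) • μ) {x | s < (‖g x‖₊ : ℝ≥0∞)} = 2 * M := by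
    simp [Measure.smul_apply, hM]
  rw [hsmul, Measure.restrict_apply' measurableSet_Ioi]
  rcases eq_or_ne M ⊤ with hMt | hMt
  · rw [hMt]; simp
  have key : ∀ t : ℝ, 0 < t → s < decRearr μ g (t/2) → ENNReal.ofReal (t/2) < M := by
    intro t ht hlt
    by_contra hn
    push_neg at hn
    exact absurd (decRearr_le hn) (not_le.2 hlt)
  have hsub : {t : ℝ | s < decRearr μ g (t/2)} ∩ Ioi 0 ⊆ Ioo 0 (2 * M.toReal) := by
    rintro t ⟨ht1, ht2⟩
    have ht2' : 0 < t := ht2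
    have := key t ht2' ht1
    rw [ENNReal.ofReal_lt_iff_lt_toReal (by linarith) hMt] at this
    exact ⟨ht2', by linarith⟩
  calc volume ({t : ℝ | s < decRearr μ g (t/2)} ∩ Ioi 0) ≤ volume (Ioo 0 (2 * M.toReal)) :=
        measure_mono hsub
    _ = ENNReal.ofReal (2 * M.toReal) := by rw [Real.volume_Ioo]; ring_nf
    _ = 2 * M := by
        rw [ENNReal.ofReal_mul (by norm_num), ENNReal.ofReal_toReal hMt]
        norm_num


/-- If `ψ > 0` satisfies the Young condition `μ({ψ ≤ t}) ≤ C t` and `p > 2`, then any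
measurable `f` with `∫ |f|^p ψ^{p-2} dμ < ∞` belongs to the Lorentz space `L^{p',p}(μ)`
(`1/p + 1/p' = 1`) with `‖f‖*_{p',p} ≤ C_p (∫ |f|^p ψ^{p-2} dμ)^{1/p}`. -/
theorem stmt10 {X : Type*} [MeasurableSpace X] (μ : Measure X)
    (p : ℝ) (hp : 2 < p)
    (ψ : X → ℝ) (hψm : Measurable ψ) (hψpos : ∀ x, 0 < ψ x)
    (C : ℝ) (hC : ∀ t : ℝ, 0 < t → μ {x | ψ x ≤ t} ≤ ENNReal.ofReal (C * t)) :
    ∃ Cp : ℝ≥0, ∀ f : X → ℂ, Measurable f →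
      (∫⁻ x, (‖f x‖₊ : ℝ≥0∞) ^ p * ENNReal.ofReal (ψ x ^ (p - 2)) ∂μ) < ∞ →
        lorentzNorm μ f (p / (p - 1)) p < ∞ ∧
        lorentzNorm μ f (p / (p - 1)) p
          ≤ Cp * (∫⁻ x, (‖f x‖₊ : ℝ≥0∞) ^ p * ENNReal.ofReal (ψ x ^ (p - 2)) ∂μ) ^ (1 / p) := by
  have hp0 : (0:ℝ) < p := by linarith
  have hp1 : (1:ℝ) ≤ p := by linarith
  set C' : ℝ := max C 1 with hC'def
  have hC'1 : (1:ℝ) ≤ C' := le_max_right _ _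
  have hC'0 : (0:ℝ) < C' := lt_of_lt_of_le one_pos hC'1
  have hC' : ∀ t : ℝ, 0 < t → μ {x | ψ x ≤ t} ≤ ENNReal.ofReal (C' * t) := fun t ht =>
    (hC t ht).trans (ENNReal.ofReal_le_ofReal
      (mul_le_mul_of_nonneg_right (le_max_left C 1) ht.le))
  set a : ℝ := (p - 2) / p with ha
  have ha0 : 0 < a := div_pos (by linarith) hp0
  have hap : a * p = p - 2 := by
    rw [ha]
    field_simp
  -- the constant
  set D : ℝ≥0∞ := ENNReal.ofReal (p - 1) * (2 * ENNReal.ofReal ((2 * C') ^ (p - 2))) with hD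
  have hDne : D ≠ ⊤ := by
    rw [hD]
    exact ENNReal.mul_ne_top ENNReal.ofReal_ne_top
      (ENNReal.mul_ne_top (by norm_num) ENNReal.ofReal_ne_top)
  have hDrne : D ^ (1/p) ≠ ⊤ := by
    exact (ENNReal.rpow_lt_top_of_nonneg (by positivity) hDne).ne
  refine ⟨(D ^ (1/p)).toNNReal, ?_⟩
  intro f hfm hI
  set I := ∫⁻ x, (‖f x‖₊ : ℝ≥0∞) ^ p * ENNReal.ofReal (ψ x ^ (p - 2)) ∂μ with hIdef
  -- the sigma-finite restricted measure
  set E : Set X := {x | f x ≠ 0} with hE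
  have hEm : MeasurableSet E := (hfm (measurableSet_singleton 0)).compl
  set μ' : Measure X := μ.restrict E with hμ'
  set v : X → ℝ≥0∞ := fun x => (‖f x‖₊ : ℝ≥0∞) ^ p * ENNReal.ofReal (ψ x ^ (p - 2)) with hv
  have hvm : Measurable v := by fun_prop
  set En : ℕ → Set X := fun n => {x | ((n:ℝ≥0∞) + 1)⁻¹ ≤ v x} with hEn
  have hEnfin : ∀ n, μ (En n) < ⊤ := by
    intro n
    have h1 : ((n:ℝ≥0∞) + 1)⁻¹ * μ (En n) ≤ I := mul_meas_ge_le_lintegral₀ hvm.aemeasurable _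
    by_contra hcon
    push_neg at hcon
    rw [top_le_iff.1 hcon, ENNReal.mul_top (by simp)] at h1
    exact absurd (top_le_iff.1 h1) hI.ne
  have hEunion : E = ⋃ n, En n := by
    ext x
    simp only [hE, hEn, mem_setOf_eq, mem_iUnion]
    constructor
    · intro hx
      have hvx : 0 < v x := by
        rw [hv]
        refine ENNReal.mul_pos ?_ ?_
        · have hne : (‖f x‖₊ : ℝ≥0∞) ≠ 0 := by simpa using hx
          exact (ENNReal.rpow_pos (pos_iff_ne_zero.2 hne) ENNReal.coe_ne_top).ne'
        · exact (ENNReal.ofReal_pos.2 (Real.rpow_pos_of_pos (hψpos x) _)).ne'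
      obtain ⟨n, hn⟩ := ENNReal.exists_inv_nat_lt hvx.ne'
      refine ⟨n, le_trans ?_ hn.le⟩
      exact ENNReal.inv_le_inv.2 (by simp)
    · rintro ⟨n, hn⟩ hfx
      rw [hv] at hn
      simp only [hfx, nnnorm_zero, ENNReal.coe_zero] at hn
      rw [ENNReal.zero_rpow_of_pos hp0, zero_mul] at hn
      exact absurd hn (by simp)
  haveI hσ : SigmaFinite μ' := by
    refine ⟨⟨⟨fun n => En n ∪ Eᶜ, fun _ => trivial, fun n => ?_, ?_⟩⟩⟩
    · rw [hμ', Measure.restrict_apply' hEm]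
      refine lt_of_le_of_lt (measure_mono ?_) (hEnfin n)
      rintro x ⟨hx1 | hx2, hx3⟩
      · exact hx1
      · exact absurd hx3 hx2
    · ext x
      simp only [mem_iUnion, mem_union, mem_univ, iff_true]
      by_cases hfx : f x = 0
      · exact ⟨0, Or.inr (fun hxE => hxE hfx)⟩
      · have hxE : x ∈ E := hfx
        rw [hEunion] at hxE
        obtain ⟨n, hn⟩ := mem_iUnion.1 hxE
        exact ⟨n, Or.inl hn⟩
  -- the factorization f = g * h
  set g : X → ℂ := fun x => f x * ((ψ x ^ a : ℝ) : ℂ) with hg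
  set h : X → ℂ := fun x => ((ψ x ^ (-a) : ℝ) : ℂ) with hh
  have hg_norm : ∀ x, (‖g x‖₊ : ℝ≥0∞) = (‖f x‖₊ : ℝ≥0∞) * ENNReal.ofReal (ψ x ^ a) := by
    intro x
    rw [hg]
    simp only
    rw [nnnorm_mul, ENNReal.coe_mul, Complex.nnnorm_real,
      ← enorm_eq_nnnorm (ψ x ^ a), Real.enorm_eq_ofReal (Real.rpow_nonneg (hψpos x).le a)]
  have hh_norm : ∀ x, (‖h x‖₊ : ℝ≥0∞) = ENNReal.ofReal (ψ x ^ (-a)) := by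
    intro x
    rw [hh]
    simp only
    rw [Complex.nnnorm_real, ← enorm_eq_nnnorm (ψ x ^ (-a)), Real.enorm_eq_ofReal (Real.rpow_nonneg (hψpos x).le _)]
  have hfgh : ∀ x, (‖f x‖₊ : ℝ≥0∞) ≤ (‖g x‖₊ : ℝ≥0∞) * ‖h x‖₊ := by
    intro x
    rw [hg_norm, hh_norm, mul_assoc,
      ← ENNReal.ofReal_mul (Real.rpow_nonneg (hψpos x).le a),
      ← Real.rpow_add (hψpos x), add_neg_cancel, Real.rpow_zero, ENNReal.ofReal_one, mul_one]
  have hgp : ∀ x, (‖g x‖₊ : ℝ≥0∞) ^ p = v x := by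
    intro x
    rw [hg_norm, ENNReal.mul_rpow_of_nonneg _ _ hp0.le,
      ENNReal.ofReal_rpow_of_nonneg (Real.rpow_nonneg (hψpos x).le a) hp0.le,
      ← Real.rpow_mul (hψpos x).le, hap]
  -- distribution equality for f between μ and μ'
  have hdist_f : ∀ s : ℝ≥0∞, μ' {x | s < (‖f x‖₊ : ℝ≥0∞)} = μ {x | s < (‖f x‖₊ : ℝ≥0∞)} := by
    intro s
    rw [hμ', Measure.restrict_apply' hEm]
    congr 1
    rw [inter_eq_self_of_subset_left]
    intro x hx
    simp only [mem_setOf_eq] at hx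
    show f x ≠ 0
    intro hfx
    rw [hfx] at hx
    simp at hx
  have hdec_f : ∀ t, decRearr μ f t = decRearr μ' f t := by
    intro t
    rw [decRearr, decRearr]
    congr 1
    ext s
    simp only [mem_setOf_eq, hdist_f]
  -- the weak bound on h
  have hhstar : ∀ t : ℝ, 0 < t →
      decRearr μ' h (t/2) ≤ ENNReal.ofReal ((t/(2*C')) ^ (-a)) := by
    intro t ht
    have hτ : 0 < t/(2*C') := by positivity
    apply decRearr_le
    have hsub : {x | ENNReal.ofReal ((t/(2*C')) ^ (-a)) < (‖h x‖₊ : ℝ≥0∞)}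
        ⊆ {x | ψ x ≤ t/(2*C')} := by
      intro x hx
      simp only [mem_setOf_eq, hh_norm] at hx ⊢
      rw [ENNReal.ofReal_lt_ofReal_iff_of_nonneg (Real.rpow_nonneg hτ.le _)] at hx
      exact ((Real.rpow_lt_rpow_iff_of_neg hτ (hψpos x) (by linarith)).1 hx).le
    have step : μ' {x | ENNReal.ofReal ((t/(2*C')) ^ (-a)) < (‖h x‖₊ : ℝ≥0∞)}
        ≤ μ {x | ψ x ≤ t/(2*C')} := by
      rw [hμ', Measure.restrict_apply' hEm]
      exact measure_mono (le_trans (inter_subset_left) hsub)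
    refine le_trans step (le_trans (hC' _ hτ) (ENNReal.ofReal_le_ofReal (le_of_eq ?_)))
    field_simp
  -- the g-side integral bound via layer cake
  have hFanti : Antitone (fun t : ℝ => decRearr μ' g (t/2)) := by
    intro t1 t2 h12
    exact decRearr_anti μ' g (by linarith : t1/2 ≤ t2/2)
  have hGstar : (∫⁻ t in Ioi (0:ℝ), (decRearr μ' g (t/2)) ^ p) ≤ 2 * I := by
    have hcomp := layer_compare (volume.restrict (Ioi (0:ℝ))) ((2:ℝ≥0∞) • μ')
      hFanti.measurable (show Measurable fun x => (‖g x‖₊ : ℝ≥0∞) by fun_prop) hp1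
      (fun s => dist_decRearr_scaled μ' g s)
    refine le_trans hcomp ?_
    rw [lintegral_smul_measure]
    refine mul_le_mul_right ?_ 2
    calc ∫⁻ x, (‖g x‖₊ : ℝ≥0∞) ^ p ∂μ' = ∫⁻ x, v x ∂μ' := lintegral_congr hgp
      _ ≤ ∫⁻ x, v x ∂μ := lintegral_mono' Measure.restrict_le_self le_rfl
      _ = I := rfl
  -- pointwise estimate
  have hpoint : ∀ t ∈ Ioi (0:ℝ),
      ENNReal.ofReal (t ^ (p-2)) * decRearr μ f t ^ p
        ≤ decRearr μ' g (t/2) ^ p * ENNReal.ofReal ((2*C') ^ (p-2)) := by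
    intro t ht'
    have ht : 0 < t := ht'
    have hτ : 0 < t/(2*C') := by positivity
    have htt : t/2 + t/2 = t := by ring
    have hsplit : decRearr μ' f t ≤ decRearr μ' g (t/2) * decRearr μ' h (t/2) := by
      have := decRearr_mul_le μ' f g h hfgh (t1 := t/2) (t2 := t/2) (by linarith) (by linarith)
      rwa [htt] at this
    have hmain : decRearr μ f t ≤ decRearr μ' g (t/2) * ENNReal.ofReal ((t/(2*C')) ^ (-a)) := by
      rw [hdec_f]
      exact le_trans hsplit (mul_le_mul_right (hhstar t ht) _)
    have hreal : t ^ (p-2) * ((t/(2*C')) ^ (-a)) ^ p = (2*C') ^ (p-2) := by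
      have h1 : ((t/(2*C')) ^ (-a)) ^ p = (t/(2*C')) ^ (-(p-2)) := by
        rw [← Real.rpow_mul hτ.le]
        congr 1
        rw [neg_mul, hap]
      rw [h1, Real.rpow_neg hτ.le, Real.div_rpow ht.le (by positivity : (0:ℝ) ≤ 2*C')]
      have hne1 : t ^ (p-2) ≠ 0 := (Real.rpow_pos_of_pos ht _).ne'
      have hne2 : (2*C') ^ (p-2) ≠ 0 := (Real.rpow_pos_of_pos (by positivity) _).ne'
      field_simp
    calc ENNReal.ofReal (t ^ (p-2)) * decRearr μ f t ^ p
        ≤ ENNReal.ofReal (t ^ (p-2)) *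
            (decRearr μ' g (t/2) * ENNReal.ofReal ((t/(2*C')) ^ (-a))) ^ p :=
          mul_le_mul_right (ENNReal.rpow_le_rpow hmain hp0.le) _
      _ = decRearr μ' g (t/2) ^ p *
            (ENNReal.ofReal (t ^ (p-2)) * ENNReal.ofReal ((t/(2*C')) ^ (-a)) ^ p) := by
          rw [ENNReal.mul_rpow_of_nonneg _ _ hp0.le]
          ring
      _ = decRearr μ' g (t/2) ^ p * ENNReal.ofReal ((2*C') ^ (p-2)) := by
          rw [ENNReal.ofReal_rpow_of_nonneg (Real.rpow_nonneg hτ.le _) hp0.le,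
            ← ENNReal.ofReal_mul (Real.rpow_nonneg ht.le _), hreal]
  -- the main integral bound
  have hJ : (∫⁻ t in Ioi (0:ℝ), ENNReal.ofReal (t ^ (p-2)) * decRearr μ f t ^ p)
      ≤ 2 * I * ENNReal.ofReal ((2*C') ^ (p-2)) := by
    calc (∫⁻ t in Ioi (0:ℝ), ENNReal.ofReal (t ^ (p-2)) * decRearr μ f t ^ p)
        ≤ ∫⁻ t in Ioi (0:ℝ), decRearr μ' g (t/2) ^ p * ENNReal.ofReal ((2*C') ^ (p-2)) := by
          refine lintegral_mono_ae ?_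
          rw [ae_restrict_iff' measurableSet_Ioi]
          exact Filter.Eventually.of_forall hpoint
      _ = (∫⁻ t in Ioi (0:ℝ), decRearr μ' g (t/2) ^ p) * ENNReal.ofReal ((2*C') ^ (p-2)) :=
          lintegral_mul_const' _ _ ENNReal.ofReal_ne_top
      _ ≤ 2 * I * ENNReal.ofReal ((2*C') ^ (p-2)) := mul_le_mul_left hGstar _
  -- rewrite the Lorentz norm
  have hlor : lorentzNorm μ f (p/(p-1)) p
      = (ENNReal.ofReal (p-1) *
          ∫⁻ t in Ioi (0:ℝ), ENNReal.ofReal (t ^ (p-2)) * decRearr μ f t ^ p) ^ (1/p) := by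
    rw [lorentzNorm]
    have he : p / (p/(p-1)) = p - 1 := by
      have h2 : p - 1 ≠ 0 := by linarith
      field_simp
    have he2 : p - 1 - 1 = p - 2 := by ring
    simp only [he, he2]
  have hfinal : lorentzNorm μ f (p/(p-1)) p ≤ (D * I) ^ (1/p) := by
    rw [hlor]
    refine ENNReal.rpow_le_rpow ?_ (by positivity)
    calc ENNReal.ofReal (p-1) *
          ∫⁻ t in Ioi (0:ℝ), ENNReal.ofReal (t ^ (p-2)) * decRearr μ f t ^ p
        ≤ ENNReal.ofReal (p-1) * (2 * I * ENNReal.ofReal ((2*C') ^ (p-2))) :=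
          mul_le_mul_right hJ _
      _ = D * I := by rw [hD]; ring
  constructor
  · refine lt_of_le_of_lt hfinal ?_
    rw [ENNReal.mul_rpow_of_nonneg _ _ (by positivity : (0:ℝ) ≤ 1/p)]
    exact ENNReal.mul_lt_top (ENNReal.rpow_lt_top_of_nonneg (by positivity) hDne)
      (ENNReal.rpow_lt_top_of_nonneg (by positivity) hI.ne)
  · refine le_trans hfinal ?_
    rw [ENNReal.mul_rpow_of_nonneg _ _ (by positivity : (0:ℝ) ≤ 1/p),
      ENNReal.coe_toNNReal hDrne]
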